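/- Let A, B be C*-algebras, A₀ ⊆ A a dense *-subalgebra, and π₀ : A₀ → B a *-homomorphism. The following are equivalent: (i) π₀ extends to a (necessarily unique) *-homomorphism π : A → B; (ii) there exists a jointly faithful family {σ_i : B → D_i}_{i∈I} of positive linear maps into C*-algebras D_i such that every composition σ_i ∘ π₀ : A₀ → D_i is bounded with respect to the norm of A (equivalently, extends to a continuous positive linear map on A). -/

import Mathlib

open scoped ComplexOrder

universe u

/-- `L_ψ = {a | ψ (star a * a) = 0}`. -/
def Lset {E F : Type*} [Mul E] [Star E] [Zero F] (ψ : E → F) : Set E :=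
  {a | ψ (star a * a) = 0}

/-- A positive linear map from `B` into some C*-algebra (the target is part of the data). -/
structure PosLinMapFrom (B : Type u) [NonUnitalCStarAlgebra B] [PartialOrder B]
    [StarOrderedRing B] : Type (u + 1) where
  carrier : Type u
  [algInst : NonUnitalCStarAlgebra carrier]
  [ordInst : PartialOrder carrier]
  [starOrdInst : StarOrderedRing carrier]
  toFun : B →ₗ[ℂ] carrier
  pos : ∀ b : B, 0 ≤ b → 0 ≤ toFun b

attribute [instance] PosLinMapFrom.algInst PosLinMapFrom.ordInst PosLinMapFrom.starOrdInst

/-- `npow1 c n = c ^ (n + 1)`, available in non-unital algebras. -/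
def npow1 {R : Type*} [Mul R] (c : R) : ℕ → R
  | 0 => c
  | n + 1 => c * npow1 c n

lemma map_npow1 {R S F : Type*} [Mul R] [Mul S] [FunLike F R S] [MulHomClass F R S]
    (φ : F) (c : R) (n : ℕ) : φ (npow1 c n) = npow1 (φ c) n := by
  induction n with
  | zero => rfl
  | succ n ih => simp [npow1, map_mul, ih]

lemma norm_npow1_le {R : Type*} [NonUnitalSeminormedRing R] (c : R) (n : ℕ) :
    ‖npow1 c n‖ ≤ ‖c‖ ^ (n + 1) := by
  induction n with
  | zero => simp [npow1]
  | succ n ih =>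
    calc ‖c * npow1 c n‖ ≤ ‖c‖ * ‖npow1 c n‖ := norm_mul_le _ _
      _ ≤ ‖c‖ * ‖c‖ ^ (n + 1) := mul_le_mul_of_nonneg_left ih (norm_nonneg c)
      _ = ‖c‖ ^ (n + 2) := by ring

lemma cfcₙ_npow1 {B : Type*} [NonUnitalCStarAlgebra B] [PartialOrder B] [StarOrderedRing B]
    (d : B) (hd : IsSelfAdjoint d) (n : ℕ) :
    cfcₙ (fun t : ℝ => t ^ (n + 1)) d = npow1 d n := by
  induction n with
  | zero =>
    simp only [zero_add, pow_one, npow1]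
    exact cfcₙ_id' ℝ d hd
  | succ n ih =>
    have h : (fun t : ℝ => t ^ (n + 2)) = fun t : ℝ => t * t ^ (n + 1) := by
      ext t; ring
    rw [h, cfcₙ_mul _ _ d (by fun_prop) (by simp) (by fun_prop) (by simp),
      cfcₙ_id' ℝ d hd, ih]
    rfl

lemma quasispectrum_norm_le' {B : Type u} [NonUnitalCStarAlgebra B] {x : B} {t : ℝ}
    (ht : t ∈ quasispectrum ℝ x) : ‖t‖ ≤ ‖x‖ := by
  rw [Unitization.quasispectrum_eq_spectrum_inr' ℝ ℂ x] at ht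
  simpa [Unitization.norm_inr] using spectrum.norm_le_norm_of_mem ht

lemma norm_mem_quasispectrum_of_nonneg {B : Type u} [NonUnitalCStarAlgebra B] [PartialOrder B]
    [StarOrderedRing B] {d : B} (hd : 0 ≤ d) : ‖d‖ ∈ quasispectrum ℝ d := by
  rw [Unitization.quasispectrum_eq_spectrum_inr' ℝ ℂ d]
  have := CStarAlgebra.norm_mem_spectrum_of_nonneg
    (a := (d : Unitization ℂ B)) (Unitization.inr_nonneg_iff.mpr hd)
  rwa [Unitization.norm_inr] at this

theorem key_bound {A B : Type u}
    [NonUnitalCStarAlgebra A] [PartialOrder A] [StarOrderedRing A]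
    [NonUnitalCStarAlgebra B] [PartialOrder B] [StarOrderedRing B]
    (A₀ : NonUnitalStarSubalgebra ℂ A) (π₀ : ↥A₀ →⋆ₙₐ[ℂ] B)
    {I : Type u} (σ : I → PosLinMapFrom B)
    (hfaith : (⋂ i, Lset fun b : B => (σ i).toFun b) = ({0} : Set B))
    (hbdd : ∀ i, ∃ C : ℝ, ∀ a : ↥A₀, ‖(σ i).toFun (π₀ a)‖ ≤ C * ‖(a : A)‖)
    (a : ↥A₀) : ‖π₀ a‖ ≤ ‖(a : A)‖ := by
  set c : ↥A₀ := star a * a with hc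
  set d : B := π₀ c with hdd
  have hd : d = star (π₀ a) * (π₀ a) := by rw [hdd, hc, map_mul, map_star]
  have hdpos : 0 ≤ d := hd ▸ star_mul_self_nonneg _
  have hdsa : IsSelfAdjoint d := .of_nonneg hdpos
  suffices h : ‖d‖ ≤ ‖(c : A)‖ by
    have h1 : ‖π₀ a‖ * ‖π₀ a‖ = ‖d‖ := by rw [hd, CStarRing.norm_star_mul_self]
    have h2 : ‖(c : A)‖ = ‖(a : A)‖ * ‖(a : A)‖ := by
      have hcc : ((c : A)) = star (a : A) * (a : A) := rfl
      rw [hcc, CStarRing.norm_star_mul_self]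
    nlinarith [norm_nonneg (π₀ a), norm_nonneg ((a : A))]
  by_contra hlt
  push_neg at hlt
  set s : ℝ := ‖(c : A)‖ with hs
  set r : ℝ := ‖d‖ with hr
  have hspos : 0 < s := by
    rcases (norm_nonneg ((c : A))).lt_or_eq with h | h
    · exact h
    · exfalso
      have hcA : (c : A) = 0 := norm_eq_zero.mp h.symm
      have hc0 : c = 0 := Subtype.ext hcA
      have hd0 : d = 0 := by rw [hdd, hc0, map_zero]
      have hr0 : r = 0 := by rw [hr, hd0, norm_zero]
      have hs0' : s = 0 := by rw [hs, hcA, norm_zero]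
      rw [hr0, hs0'] at hlt
      exact lt_irrefl 0 hlt
  set s' : ℝ := (s + r) / 2 with hs'
  have hss' : s < s' := by rw [hs']; linarith
  have hs'r : s' < r := by rw [hs']; linarith
  have hs'pos : 0 < s' := hspos.trans hss'
  -- quasispectrum facts
  have hspec : ∀ t ∈ quasispectrum ℝ d, 0 ≤ t ∧ t ≤ r := by
    intro t ht
    refine ⟨quasispectrum_nonneg_of_nonneg d hdpos t ht, ?_⟩
    have := quasispectrum_norm_le' ht
    exact (Real.le_norm_self t).trans this
  have hrmem : r ∈ quasispectrum ℝ d := norm_mem_quasispectrum_of_nonneg hdpos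
  -- the functions
  set f : ℝ → ℝ := fun t => max (t - s') 0 with hf
  have hfcont : Continuous f := by fun_prop
  have hf0 : f 0 = 0 := by simp [hf, max_eq_right, hs'pos.le]
  set g : B := cfcₙ f d with hg
  set b : B := cfcₙ (fun t => Real.sqrt (f t)) d with hb
  have hbf0 : Real.sqrt (f 0) = 0 := by rw [hf0, Real.sqrt_zero]
  have hbsa : IsSelfAdjoint b := cfcₙ_predicate _ d
  have hb2 : star b * b = g := by
    rw [hbsa.star_eq, hb, hg, ← cfcₙ_mul _ _ d (by fun_prop) (by rw [hbf0]) (by fun_prop)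
      (by rw [hbf0])]
    congr 1
    ext t
    exact Real.mul_self_sqrt (le_max_right _ _)
  have hgpos : 0 ≤ g := cfcₙ_nonneg fun t ht => le_max_right _ _
  -- each σ i kills g
  have hσg : ∀ i, (σ i).toFun g = 0 := by
    intro i
    obtain ⟨C, hC⟩ := hbdd i
    have hC0 : 0 ≤ C := by
      have h1 : (0 : ℝ) ≤ ‖(σ i).toFun (π₀ c)‖ := norm_nonneg _
      have h2 := hC c
      nlinarith
    have hbound : ∀ n : ℕ, ‖(σ i).toFun g‖ ≤ r * C * (s / s') ^ (n + 1) := by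
      intro n
      set K : ℝ := r / s' ^ (n + 1) with hK
      have hK0 : 0 ≤ K := div_nonneg (norm_nonneg d) (pow_pos hs'pos _).le
      have hfn : ∀ t ∈ quasispectrum ℝ d, f t ≤ K * t ^ (n + 1) := by
        intro t ht
        obtain ⟨ht0, htr⟩ := hspec t ht
        by_cases hts' : t ≤ s'
        · have : f t = 0 := max_eq_right (by linarith)
          rw [this]
          positivity
        · push_neg at hts'
          have hft : f t = t - s' := max_eq_left (by linarith)
          have hpow : s' ^ (n + 1) ≤ t ^ (n + 1) := pow_le_pow_left₀ hs'pos.le hts'.le _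
          have hrK : r ≤ K * t ^ (n + 1) := by
            rw [hK, div_mul_eq_mul_div, le_div_iff₀ (pow_pos hs'pos _)]
            exact mul_le_mul_of_nonneg_left hpow (norm_nonneg d)
          rw [hft]
          linarith
      have hmono : g ≤ cfcₙ (fun t : ℝ => K * t ^ (n + 1)) d := by
        rw [hg]
        exact cfcₙ_mono hfn (by fun_prop) (by fun_prop) hf0 (by simp)
      rw [cfcₙ_const_mul _ _ d (by fun_prop) (by simp), cfcₙ_npow1 d hdsa n] at hmono
      have hmapσ : (σ i).toFun g ≤ (σ i).toFun (K • npow1 d n) := by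
        have h' := (σ i).pos _ (sub_nonneg.mpr hmono)
        rw [map_sub] at h'
        exact sub_nonneg.mp h'
      have hpos' : 0 ≤ (σ i).toFun g := (σ i).pos g hgpos
      have hnorm1 : ‖(σ i).toFun g‖ ≤ ‖(σ i).toFun (K • npow1 d n)‖ :=
        CStarAlgebra.norm_le_norm_of_nonneg_of_le hpos' hmapσ
      have hsmul : (σ i).toFun (K • npow1 d n) = K • (σ i).toFun (npow1 d n) :=
        LinearMap.map_smul_of_tower _ _ _
      have hnd : npow1 d n = π₀ (npow1 c n) := (map_npow1 π₀ c n).symm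
      have hnorm2 : ‖(σ i).toFun (npow1 d n)‖ ≤ C * s ^ (n + 1) := by
        rw [hnd]
        refine (hC (npow1 c n)).trans ?_
        have hcoe : ((npow1 c n : ↥A₀) : A) = npow1 ((c : ↥A₀) : A) n := by
          exact map_npow1 (NonUnitalStarSubalgebraClass.subtype A₀) c n
        rw [hcoe]
        exact mul_le_mul_of_nonneg_left (norm_npow1_le _ _) hC0
      calc ‖(σ i).toFun g‖ ≤ ‖K • (σ i).toFun (npow1 d n)‖ := by rwa [← hsmul]
        _ = K * ‖(σ i).toFun (npow1 d n)‖ := by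
            rw [norm_smul, Real.norm_of_nonneg hK0]
        _ ≤ K * (C * s ^ (n + 1)) := mul_le_mul_of_nonneg_left hnorm2 hK0
        _ = r * C * (s / s') ^ (n + 1) := by
            rw [hK]
            clear_value s'
            rw [div_pow]
            ring
    have htend : Filter.Tendsto (fun n : ℕ => r * C * (s / s') ^ (n + 1)) Filter.atTop
        (nhds 0) := by
      have h1 : |s / s'| < 1 := by
        rw [abs_of_nonneg (div_nonneg hspos.le hs'pos.le)]
        rw [div_lt_one hs'pos]
        exact hss'
      have := tendsto_pow_atTop_nhds_zero_of_abs_lt_one h1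
      have h2 := this.comp (Filter.tendsto_add_atTop_nat 1)
      simpa using (h2.const_mul (r * C))
    have hle : ‖(σ i).toFun g‖ ≤ 0 := ge_of_tendsto' htend hbound
    exact norm_le_zero_iff.mp hle
  -- faithfulness forces b = 0, hence g = 0
  have hbmem : b ∈ ⋂ i, Lset fun x : B => (σ i).toFun x := by
    refine Set.mem_iInter.mpr fun i => ?_
    show (σ i).toFun (star b * b) = 0
    rw [hb2]
    exact hσg i
  rw [hfaith] at hbmem
  have hb0 : b = 0 := hbmem
  have hg0 : g = 0 := by rw [← hb2, hb0, star_zero, mul_zero]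
  -- but `f r` lies in the quasispectrum of `g`, contradiction
  have hfr : f r ∈ quasispectrum ℝ g := by
    rw [hg, cfcₙ_map_quasispectrum f d hfcont.continuousOn hf0 hdsa]
    exact Set.mem_image_of_mem f hrmem
  rw [hg0] at hfr
  have hle := quasispectrum_norm_le' hfr
  rw [norm_zero] at hle
  have hfrpos : 0 < f r := by
    have : 0 < r - s' := by linarith
    calc (0 : ℝ) < r - s' := this
      _ ≤ max (r - s') 0 := le_max_left _ _
  have : ‖f r‖ = 0 := le_antisymm hle (norm_nonneg _)
  rw [norm_eq_zero] at this
  linarith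

/-- The identity of `B` as a positive linear map. -/
def idPosMap (B : Type u) [NonUnitalCStarAlgebra B] [PartialOrder B] [StarOrderedRing B] :
    PosLinMapFrom B where
  carrier := B
  toFun := LinearMap.id
  pos := fun _ hb => hb

@[simp] lemma idPosMap_apply (B : Type u) [NonUnitalCStarAlgebra B] [PartialOrder B]
    [StarOrderedRing B] (b : B) : (idPosMap B).toFun b = b := rfl

theorem stmt2 {A B : Type u}
    [NonUnitalCStarAlgebra A] [PartialOrder A] [StarOrderedRing A]
    [NonUnitalCStarAlgebra B] [PartialOrder B] [StarOrderedRing B]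
    (A₀ : NonUnitalStarSubalgebra ℂ A) (hdense : Dense (A₀ : Set A))
    (π₀ : ↥A₀ →⋆ₙₐ[ℂ] B) :
    (∃ π : A →⋆ₙₐ[ℂ] B, ∀ a : ↥A₀, π (a : A) = π₀ a) ↔
      ∃ (I : Type u) (σ : I → PosLinMapFrom B),
        (⋂ i, Lset fun b : B => (σ i).toFun b) = ({0} : Set B) ∧
        ∀ i, ∃ C : ℝ, ∀ a : ↥A₀, ‖(σ i).toFun (π₀ a)‖ ≤ C * ‖(a : A)‖ := by
  constructor
  · rintro ⟨π, hπ⟩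
    refine ⟨PUnit, fun _ => idPosMap B, ?_, ?_⟩
    · ext b
      simp only [Set.mem_iInter, Lset, Set.mem_setOf_eq, idPosMap_apply,
        Set.mem_singleton_iff]
      constructor
      · intro h
        exact CStarRing.star_mul_self_eq_zero_iff b |>.mp (h PUnit.unit)
      · rintro rfl _
        exact (CStarRing.star_mul_self_eq_zero_iff _).mpr rfl
    · intro _
      refine ⟨1, fun a => ?_⟩
      simp only [idPosMap_apply, one_mul]
      rw [← hπ a]
      exact NonUnitalStarAlgHom.norm_apply_le π ((a : A))
  · rintro ⟨I, σ, hfaith, hbdd⟩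
    have hb : ∀ a : ↥A₀, ‖π₀ a‖ ≤ ‖(a : A)‖ := key_bound A₀ π₀ σ hfaith hbdd
    -- the inclusion of `A₀` into `A` as a continuous linear map
    let e : ↥A₀ →L[ℂ] A :=
      { toFun := Subtype.val
        map_add' := fun _ _ => rfl
        map_smul' := fun _ _ => rfl
        cont := continuous_subtype_val }
    have hde : DenseRange e := by
      have : Set.range e = (A₀ : Set A) := Subtype.range_val
      rw [DenseRange, this]
      exact hdense
    have h_e : IsUniformInducing e := isometry_subtype_coe.isUniformInducing
    -- `π₀` as a continuous linear map
    let f : ↥A₀ →L[ℂ] B :=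
      LinearMap.mkContinuous
        { toFun := π₀
          map_add' := fun x y => map_add π₀ x y
          map_smul' := fun m x => map_smul π₀ m x } 1
        (fun a => by simpa using hb a)
    let πl : A →L[ℂ] B := f.extend e
    have hext : ∀ a : ↥A₀, πl ((a : A)) = π₀ a := fun a =>
      ContinuousLinearMap.extend_eq f hde h_e a
    have hmul : ∀ x y : A, πl (x * y) = πl x * πl y := by
      have key : (fun p : A × A => πl (p.1 * p.2)) = fun p => πl p.1 * πl p.2 := by
        refine Continuous.ext_on (hdense.prod hdense) ?_ ?_ ?_
        · exact πl.continuous.comp (continuous_fst.mul continuous_snd)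
        · exact (πl.continuous.comp continuous_fst).mul (πl.continuous.comp continuous_snd)
        · rintro ⟨x, y⟩ ⟨hx, hy⟩
          have h1 : x * y = ((⟨x, hx⟩ * ⟨y, hy⟩ : ↥A₀) : A) := rfl
          show πl (x * y) = πl x * πl y
          rw [h1, hext, map_mul]
          have h2 : πl x = π₀ ⟨x, hx⟩ := hext ⟨x, hx⟩
          have h3 : πl y = π₀ ⟨y, hy⟩ := hext ⟨y, hy⟩
          rw [h2, h3]
      intro x y
      exact congrFun key (x, y)
    have hstar : ∀ x : A, πl (star x) = star (πl x) := by
      have key : (fun x : A => πl (star x)) = fun x => star (πl x) := by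
        refine Continuous.ext_on hdense ?_ ?_ ?_
        · exact πl.continuous.comp continuous_star
        · exact continuous_star.comp πl.continuous
        · intro x hx
          have hsx : star x ∈ A₀ := star_mem hx
          have h1 : star x = ((⟨star x, hsx⟩ : ↥A₀) : A) := rfl
          show πl (star x) = star (πl x)
          rw [h1, hext]
          have h2 : (⟨star x, hsx⟩ : ↥A₀) = star (⟨x, hx⟩ : ↥A₀) := rfl
          rw [h2, map_star]
          rw [hext ⟨x, hx⟩]
      intro x
      exact congrFun key x
    refine ⟨{ toFun := πl
              map_smul' := fun m x => map_smul πl m x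
              map_zero' := map_zero πl
              map_add' := map_add πl
              map_mul' := hmul
              map_star' := hstar }, fun a => hext a⟩
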